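/- Let α ∈ (0,2], let ξ satisfy E(ξ²1{|ξ|≤x})/(x^{2−α}ℓ(x)) → 1 for a slowly varying ℓ, and let b_n → ∞ be such that limsup_n n b_n^{−2} E(ξ²1{|ξ|≤b_n}) < ∞. Then for every β < α, limsup_n n b_n^{−β} E(|ξ|^β 1{|ξ|>b_n}) < ∞. -/

import Mathlib

open MeasureTheory Filter Set

/-- `L` is slowly varying at infinity. -/
def SlowlyVarying (L : ℝ → ℝ) : Prop :=
  (∀ x > 0, 0 < L x) ∧ ∀ s > 0, Tendsto (fun x => L (s * x) / L x) atTop (nhds 1)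

namespace TailAux

variable {Ω : Type*} [MeasurableSpace Ω] (μ : Measure Ω) (ξ : Ω → ℝ)

/-- Truncated second moment. -/
noncomputable def U (x : ℝ) : ℝ := ∫ ω, (if |ξ ω| ≤ x then (ξ ω) ^ 2 else 0) ∂μ

variable {μ ξ}

lemma U_def (x : ℝ) : U μ ξ x = ∫ ω, (if |ξ ω| ≤ x then (ξ ω) ^ 2 else 0) ∂μ := rfl

lemma U_integrable [IsProbabilityMeasure μ] (hξ : Measurable ξ) (x : ℝ) :
    Integrable (fun ω => if |ξ ω| ≤ x then (ξ ω) ^ 2 else 0) μ := by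
  refine (integrable_const (x ^ 2)).mono' ?_ ?_
  · exact (Measurable.ite (measurableSet_le hξ.abs measurable_const)
      (hξ.pow measurable_const) measurable_const).aestronglyMeasurable
  · filter_upwards with ω
    by_cases h : |ξ ω| ≤ x
    · simp only [h, if_true, Real.norm_eq_abs, abs_of_nonneg (sq_nonneg (ξ ω))]
      calc (ξ ω) ^ 2 = |ξ ω| ^ 2 := (sq_abs _).symm
        _ ≤ x ^ 2 := by
            have h0 : (0:ℝ) ≤ |ξ ω| := abs_nonneg _
            nlinarith
    · simp [h, sq_nonneg x]

lemma U_nonneg (x : ℝ) : 0 ≤ U μ ξ x := by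
  refine integral_nonneg fun ω => ?_
  dsimp only
  split <;> positivity

lemma lintegral_trunc [IsProbabilityMeasure μ] (hξ : Measurable ξ) (x : ℝ) :
    ∫⁻ ω, ENNReal.ofReal (if |ξ ω| ≤ x then (ξ ω) ^ 2 else 0) ∂μ = ENNReal.ofReal (U μ ξ x) := by
  refine (ofReal_integral_eq_lintegral_ofReal (U_integrable hξ x) ?_).symm
  filter_upwards with ω
  by_cases h : |ξ ω| ≤ x <;> simp [h, sq_nonneg]

/-- The Karamata-type tail bound under a doubling condition for `U`. -/
lemma tail_bound [IsProbabilityMeasure μ] (hξ : Measurable ξ) (β M : ℝ) (hM : 0 < M)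
    (hr : (2:ℝ) ^ (β - 2) * M < 1) (x : ℝ) (hx : 1 ≤ x)
    (hdbl : ∀ y, x ≤ y → U μ ξ (2 * y) ≤ M * U μ ξ y) :
    Integrable (fun ω => if x < |ξ ω| then |ξ ω| ^ β else 0) μ ∧
    ∫ ω, (if x < |ξ ω| then |ξ ω| ^ β else 0) ∂μ ≤
      (max ((2:ℝ) ^ β) 1 * M * (1 - (2:ℝ) ^ (β - 2) * M)⁻¹) * x ^ (β - 2) * U μ ξ x := by
  have hxpos : (0:ℝ) < x := lt_of_lt_of_le one_pos hx
  set Cb : ℝ := max ((2:ℝ) ^ β) 1 with hCb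
  set r : ℝ := (2:ℝ) ^ (β - 2) * M with hrdef
  have hrpos : 0 < r := mul_pos (Real.rpow_pos_of_pos two_pos _) hM
  have hCb1 : (1:ℝ) ≤ Cb := le_max_right _ _
  have hCb0 : (0:ℝ) < Cb := lt_of_lt_of_le one_pos hCb1
  -- dyadic scales
  set c : ℕ → ℝ := fun k => 2 ^ k * x with hcdef
  have hc : ∀ k, 0 < c k := fun k => by positivity
  have hcx : ∀ k, x ≤ c k := fun k => by
    have h1 : (1:ℝ) ≤ 2 ^ k := one_le_pow₀ (by norm_num)
    calc x = 1 * x := (one_mul x).symm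
      _ ≤ 2 ^ k * x := by nlinarith
  have hcs : ∀ k, c (k + 1) = 2 * c k := fun k => by
    simp only [hcdef, pow_succ]; ring
  have hcmono : ∀ k, c k ≤ c (k + 1) := fun k => by
    rw [hcs k]; nlinarith [hc k]
  -- iterated doubling
  have hUk : ∀ k, U μ ξ (c k) ≤ M ^ k * U μ ξ x := by
    intro k
    induction k with
    | zero => simp [hcdef]
    | succ n ih =>
        rw [hcs n, pow_succ]
        calc U μ ξ (2 * c n) ≤ M * U μ ξ (c n) := hdbl _ (hcx n)
          _ ≤ M * (M ^ n * U μ ξ x) := by nlinarith [U_nonneg (μ := μ) (ξ := ξ) (c n)]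
          _ = M ^ n * M * U μ ξ x := by ring
  -- dyadic blocks
  set B : ℕ → Set Ω := fun k => {ω | c k < |ξ ω| ∧ |ξ ω| ≤ c (k + 1)} with hBdef
  have hBmeas : ∀ k, MeasurableSet (B k) := fun k =>
    (measurableSet_lt measurable_const hξ.abs).inter (measurableSet_le hξ.abs measurable_const)
  have htail : {ω | x < |ξ ω|} ⊆ ⋃ k, B k := by
    intro ω hω
    have hex : ∃ k, |ξ ω| ≤ c (k + 1) := by
      obtain ⟨n, hn⟩ := pow_unbounded_of_one_lt (|ξ ω|) (one_lt_two (α := ℝ))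
      refine ⟨n, ?_⟩
      have : (2:ℝ) ^ n ≤ c (n + 1) := by
        have h1 : (2:ℝ) ^ n ≤ 2 ^ (n+1) := by
          have := pow_le_pow_right₀ (a := (2:ℝ)) (by norm_num) (Nat.le_succ n)
          exact this
        calc (2:ℝ) ^ n ≤ 2 ^ (n+1) := h1
          _ = 2 ^ (n+1) * 1 := (mul_one _).symm
          _ ≤ 2 ^ (n+1) * x := by nlinarith [pow_pos (zero_lt_two (α := ℝ)) (n+1)]
      exact le_trans hn.le this
    classical
    set k := Nat.find hex with hk
    refine mem_iUnion.2 ⟨k, ?_, Nat.find_spec hex⟩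
    rcases Nat.eq_zero_or_pos k with h0 | h0
    · rw [h0]
      have : c 0 = x := by simp [hcdef]
      rw [this]; exact hω
    · obtain ⟨m, hm⟩ := Nat.exists_eq_succ_of_ne_zero h0.ne'
      have hmin := Nat.find_min hex (m := m) (by omega)
      rw [hm]
      push_neg at hmin
      have : c (m + 1) < |ξ ω| := hmin
      exact this
  -- Chebyshev on each block
  have hcheb : ∀ k, μ (B k) ≤ ENNReal.ofReal ((c k ^ 2)⁻¹ * U μ ξ (c (k + 1))) := by
    intro k
    have h1 : ENNReal.ofReal (c k ^ 2) * μ (B k) ≤ ENNReal.ofReal (U μ ξ (c (k + 1))) := by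
      rw [← lintegral_trunc hξ]
      calc ENNReal.ofReal (c k ^ 2) * μ (B k)
          = ∫⁻ _ω in B k, ENNReal.ofReal (c k ^ 2) ∂μ := (setLIntegral_const _ _).symm
        _ ≤ ∫⁻ ω in B k, ENNReal.ofReal ((ξ ω) ^ 2) ∂μ := by
            refine setLIntegral_mono ((ENNReal.measurable_ofReal).comp
              (hξ.pow measurable_const)) fun ω hω => ?_
            refine ENNReal.ofReal_le_ofReal ?_
            have h2 : c k ≤ |ξ ω| := hω.1.le
            calc c k ^ 2 ≤ |ξ ω| ^ 2 := by nlinarith [hc k, abs_nonneg (ξ ω)]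
              _ = (ξ ω) ^ 2 := sq_abs _
        _ ≤ ∫⁻ ω, ENNReal.ofReal (if |ξ ω| ≤ c (k + 1) then (ξ ω) ^ 2 else 0) ∂μ := by
            rw [← lintegral_indicator (hBmeas k)]
            refine lintegral_mono fun ω => ?_
            by_cases hω : ω ∈ B k
            · simp only [indicator_of_mem hω, hω.2, if_true]; exact le_refl _
            · simp [indicator_of_notMem hω]
    have ha0 : ENNReal.ofReal (c k ^ 2) ≠ 0 := by
      simp [ENNReal.ofReal_eq_zero, not_le]
      positivity
    have hatop : ENNReal.ofReal (c k ^ 2) ≠ ⊤ := ENNReal.ofReal_ne_top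
    calc μ (B k) = (ENNReal.ofReal (c k ^ 2))⁻¹ * (ENNReal.ofReal (c k ^ 2) * μ (B k)) := by
          rw [← mul_assoc, ENNReal.inv_mul_cancel ha0 hatop, one_mul]
      _ ≤ (ENNReal.ofReal (c k ^ 2))⁻¹ * ENNReal.ofReal (U μ ξ (c (k + 1))) :=
          mul_le_mul_right h1 _
      _ = ENNReal.ofReal ((c k ^ 2)⁻¹ * U μ ξ (c (k + 1))) := by
          rw [ENNReal.ofReal_mul (by positivity), ENNReal.ofReal_inv_of_pos (by positivity)]
  -- pointwise bound on each block
  have hblock : ∀ k, ∀ ω ∈ B k, |ξ ω| ^ β ≤ Cb * c k ^ β := by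
    intro k ω hω
    rcases le_or_gt 0 β with hβ | hβ
    · calc |ξ ω| ^ β ≤ (c (k + 1)) ^ β := Real.rpow_le_rpow (abs_nonneg _) hω.2 hβ
        _ = (2 * c k) ^ β := by rw [hcs]
        _ = 2 ^ β * c k ^ β := Real.mul_rpow (by norm_num) (hc k).le
        _ ≤ Cb * c k ^ β := by
            have := Real.rpow_nonneg (hc k).le β
            nlinarith [le_max_left ((2:ℝ) ^ β) 1]
    · calc |ξ ω| ^ β ≤ (c k) ^ β := Real.rpow_le_rpow_of_nonpos (hc k) hω.1.le hβ.le
        _ ≤ Cb * c k ^ β := by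
            have := Real.rpow_nonneg (hc k).le β
            nlinarith
  -- the geometric identity
  have hgeom : ∀ k, Cb * c k ^ β * ((c k ^ 2)⁻¹ * (M ^ (k + 1) * U μ ξ x)) =
      (Cb * M * x ^ (β - 2) * U μ ξ x) * r ^ k := by
    intro k
    have h1 : c k ^ β * (c k ^ 2)⁻¹ = c k ^ (β - 2) := by
      rw [← Real.rpow_two, ← Real.rpow_neg (hc k).le, ← Real.rpow_add (hc k),
        ← sub_eq_add_neg]
    have h2 : c k ^ (β - 2) = ((2:ℝ) ^ (β - 2)) ^ k * x ^ (β - 2) := by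
      rw [hcdef]
      dsimp only
      rw [Real.mul_rpow (by positivity) hxpos.le]
      congr 1
      rw [← Real.rpow_natCast 2 k, ← Real.rpow_natCast ((2:ℝ) ^ (β - 2)) k,
        ← Real.rpow_mul (by norm_num), ← Real.rpow_mul (by norm_num), mul_comm]
    calc Cb * c k ^ β * ((c k ^ 2)⁻¹ * (M ^ (k + 1) * U μ ξ x))
        = Cb * (c k ^ β * (c k ^ 2)⁻¹) * (M ^ (k + 1) * U μ ξ x) := by ring
      _ = Cb * (((2:ℝ) ^ (β - 2)) ^ k * x ^ (β - 2)) * (M ^ (k + 1) * U μ ξ x) := by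
          rw [h1, h2]
      _ = (Cb * M * x ^ (β - 2) * U μ ξ x) * (((2:ℝ) ^ (β - 2)) ^ k * M ^ k) := by ring
      _ = (Cb * M * x ^ (β - 2) * U μ ξ x) * r ^ k := by rw [hrdef, mul_pow]
  set A : ℝ := Cb * M * x ^ (β - 2) * U μ ξ x with hAdef
  have hA0 : 0 ≤ A := by
    have := U_nonneg (μ := μ) (ξ := ξ) x
    have hx2 : (0:ℝ) ≤ x ^ (β - 2) := Real.rpow_nonneg hxpos.le _
    positivity
  -- bound on block lintegrals
  have hI : ∀ k, ∫⁻ ω in B k, ENNReal.ofReal (|ξ ω| ^ β) ∂μ ≤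
      ENNReal.ofReal A * (ENNReal.ofReal r) ^ k := by
    intro k
    calc ∫⁻ ω in B k, ENNReal.ofReal (|ξ ω| ^ β) ∂μ
        ≤ ∫⁻ _ω in B k, ENNReal.ofReal (Cb * c k ^ β) ∂μ := by
          refine setLIntegral_mono measurable_const fun ω hω => ?_
          exact ENNReal.ofReal_le_ofReal (hblock k ω hω)
      _ = ENNReal.ofReal (Cb * c k ^ β) * μ (B k) := setLIntegral_const _ _
      _ ≤ ENNReal.ofReal (Cb * c k ^ β) *
          ENNReal.ofReal ((c k ^ 2)⁻¹ * U μ ξ (c (k + 1))) := mul_le_mul_right (hcheb k) _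
      _ = ENNReal.ofReal (Cb * c k ^ β * ((c k ^ 2)⁻¹ * U μ ξ (c (k + 1)))) := by
          rw [← ENNReal.ofReal_mul (by positivity)]
      _ ≤ ENNReal.ofReal (A * r ^ k) := by
          refine ENNReal.ofReal_le_ofReal ?_
          rw [← hgeom k]
          have hU1 := hUk (k + 1)
          have hpos : (0:ℝ) ≤ Cb * c k ^ β * (c k ^ 2)⁻¹ := by
            have := Real.rpow_nonneg (hc k).le β
            positivity
          calc Cb * c k ^ β * ((c k ^ 2)⁻¹ * U μ ξ (c (k + 1)))
              = (Cb * c k ^ β * (c k ^ 2)⁻¹) * U μ ξ (c (k + 1)) := by ring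
            _ ≤ (Cb * c k ^ β * (c k ^ 2)⁻¹) * (M ^ (k + 1) * U μ ξ x) := by nlinarith
            _ = Cb * c k ^ β * ((c k ^ 2)⁻¹ * (M ^ (k + 1) * U μ ξ x)) := by ring
      _ = ENNReal.ofReal A * (ENNReal.ofReal r) ^ k := by
          rw [ENNReal.ofReal_mul hA0, ENNReal.ofReal_pow hrpos.le]
  -- total tail lintegral bound
  have hindic : ∀ ω, ENNReal.ofReal (if x < |ξ ω| then |ξ ω| ^ β else 0) =
      Set.indicator {ω | x < |ξ ω|} (fun ω => ENNReal.ofReal (|ξ ω| ^ β)) ω := by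
    intro ω
    by_cases hω : x < |ξ ω|
    · simp [hω, Set.indicator_of_mem, Set.mem_setOf_eq]
    · simp [hω, Set.indicator_of_notMem, Set.mem_setOf_eq]
  have hrlt1 : r < 1 := hr
  have htot : ∫⁻ ω, ENNReal.ofReal (if x < |ξ ω| then |ξ ω| ^ β else 0) ∂μ ≤
      ENNReal.ofReal (A * (1 - r)⁻¹) := by
    calc ∫⁻ ω, ENNReal.ofReal (if x < |ξ ω| then |ξ ω| ^ β else 0) ∂μ
        = ∫⁻ ω in {ω | x < |ξ ω|}, ENNReal.ofReal (|ξ ω| ^ β) ∂μ := by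
          simp_rw [hindic]
          exact lintegral_indicator (measurableSet_lt measurable_const hξ.abs) _
      _ ≤ ∫⁻ ω in ⋃ k, B k, ENNReal.ofReal (|ξ ω| ^ β) ∂μ := lintegral_mono_set htail
      _ ≤ ∑' k, ∫⁻ ω in B k, ENNReal.ofReal (|ξ ω| ^ β) ∂μ := lintegral_iUnion_le _ _
      _ ≤ ∑' k, ENNReal.ofReal A * (ENNReal.ofReal r) ^ k := ENNReal.tsum_le_tsum hI
      _ = ENNReal.ofReal A * (1 - ENNReal.ofReal r)⁻¹ := by
          rw [ENNReal.tsum_mul_left, ENNReal.tsum_geometric]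
      _ = ENNReal.ofReal (A * (1 - r)⁻¹) := by
          rw [ENNReal.ofReal_mul hA0, ← ENNReal.ofReal_one, ← ENNReal.ofReal_sub _ hrpos.le,
            ENNReal.ofReal_inv_of_pos (by linarith)]
  have hnn : 0 ≤ᶠ[ae μ] fun ω => if x < |ξ ω| then |ξ ω| ^ β else 0 := by
    filter_upwards with ω
    split
    · exact Real.rpow_nonneg (abs_nonneg _) β
    · exact le_refl 0
  have hmeas : Measurable fun ω => if x < |ξ ω| then |ξ ω| ^ β else 0 := by
    refine Measurable.ite (measurableSet_lt measurable_const hξ.abs) ?_ measurable_const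
    fun_prop
  have hint : Integrable (fun ω => if x < |ξ ω| then |ξ ω| ^ β else 0) μ := by
    refine ⟨hmeas.aestronglyMeasurable, ?_⟩
    rw [hasFiniteIntegral_iff_ofReal hnn]
    exact lt_of_le_of_lt htot ENNReal.ofReal_lt_top
  refine ⟨hint, ?_⟩
  rw [integral_eq_lintegral_of_nonneg_ae hnn hmeas.aestronglyMeasurable]
  refine ENNReal.toReal_le_of_le_ofReal ?_ ?_
  · have := U_nonneg (μ := μ) (ξ := ξ) x
    have h1r : (0:ℝ) ≤ (1 - r)⁻¹ := inv_nonneg.2 (by linarith)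
    have hx2 : (0:ℝ) ≤ x ^ (β - 2) := Real.rpow_nonneg hxpos.le _
    positivity
  · refine le_trans htot (le_of_eq ?_)
    congr 1
    rw [hAdef]
    ring

end TailAux

/-- Let `α ∈ (0,2]`, let `E(ξ² 1{|ξ| ≤ x})` be regularly varying of index `2 - α`, and let
`b_n → ∞` be such that `limsup_n n b_n^{-2} E(ξ² 1{|ξ| ≤ b_n}) < ∞`. Then for every `β < α`,
`limsup_n n b_n^{-β} E(|ξ|^β 1{|ξ| > b_n}) < ∞`. -/
theorem tail_moment_normalization_bounded
    {Ω : Type*} [MeasurableSpace Ω] (μ : Measure Ω) [IsProbabilityMeasure μ]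
    (ξ : Ω → ℝ) (hξ : Measurable ξ)
    (α : ℝ) (hα : α ∈ Set.Ioc (0:ℝ) 2) (ℓ : ℝ → ℝ) (hℓ : SlowlyVarying ℓ)
    (hreg : Tendsto
      (fun x => (∫ ω, (if |ξ ω| ≤ x then (ξ ω) ^ 2 else 0) ∂μ) / (x ^ (2 - α) * ℓ x))
      atTop (nhds 1))
    (b : ℕ → ℝ) (hbpos : ∀ n, 0 < b n) (hb : Tendsto b atTop atTop)
    (hbound : IsBoundedUnder (· ≤ ·) atTop
      (fun n : ℕ => (n : ℝ) * (b n) ^ (-(2:ℝ)) * ∫ ω, (if |ξ ω| ≤ b n then (ξ ω) ^ 2 else 0) ∂μ)) :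
    ∀ β : ℝ, β < α →
      IsBoundedUnder (· ≤ ·) atTop
        (fun n : ℕ => (n : ℝ) * (b n) ^ (-β) * ∫ ω, (if b n < |ξ ω| then |ξ ω| ^ β else 0) ∂μ) := by
  intro β hβ
  obtain ⟨hα0, hα2⟩ := hα
  -- choose the doubling constant M
  set r0 : ℝ := (2:ℝ) ^ (β - α) with hr0def
  have hr0pos : 0 < r0 := Real.rpow_pos_of_pos two_pos _
  have hr01 : r0 < 1 := Real.rpow_lt_one_of_one_lt_of_neg one_lt_two (by linarith)
  set ε : ℝ := (1 - r0) / 9 with hεdef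
  have hε : 0 < ε := by rw [hεdef]; linarith
  have hε1 : ε < 1 / 2 := by rw [hεdef]; linarith
  set M : ℝ := (2:ℝ) ^ ((2:ℝ) - α) * ((1 + ε) ^ 2 / (1 - ε)) with hMdef
  have h2a : (0:ℝ) < (2:ℝ) ^ ((2:ℝ) - α) := Real.rpow_pos_of_pos two_pos _
  have hM0 : 0 < M := by
    rw [hMdef]
    have : (0:ℝ) < 1 - ε := by linarith
    positivity
  have hrM : (2:ℝ) ^ (β - 2) * M < 1 := by
    have hprod : (2:ℝ) ^ (β - 2) * (2:ℝ) ^ ((2:ℝ) - α) = r0 := by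
      rw [hr0def, ← Real.rpow_add two_pos]
      norm_num
    have h1ε : (0:ℝ) < 1 - ε := by linarith
    rw [hMdef, ← mul_assoc, hprod, ← mul_div_assoc, div_lt_one h1ε]
    have h9 : 9 * ε = 1 - r0 := by rw [hεdef]; ring
    nlinarith [sq_nonneg ε, mul_pos hr0pos hε]
  -- eventual doubling from regular variation
  have hev : ∀ᶠ x in atTop, TailAux.U μ ξ (2 * x) ≤ M * TailAux.U μ ξ x := by
    have hUreg : Tendsto (fun x => TailAux.U μ ξ x / (x ^ ((2:ℝ) - α) * ℓ x)) atTop (nhds 1) := by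
      simp only [TailAux.U_def]
      exact hreg
    have h1 : ∀ᶠ x in atTop, |TailAux.U μ ξ x / (x ^ ((2:ℝ) - α) * ℓ x) - 1| < ε := by
      have := hUreg (Metric.ball_mem_nhds (1:ℝ) hε)
      simpa [Metric.mem_ball, Real.dist_eq] using this
    have h2x : Tendsto (fun x : ℝ => 2 * x) atTop atTop :=
      Tendsto.const_mul_atTop two_pos tendsto_id
    have h2 : ∀ᶠ x in atTop,
        |TailAux.U μ ξ (2 * x) / ((2 * x) ^ ((2:ℝ) - α) * ℓ (2 * x)) - 1| < ε :=
      h2x.eventually h1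
    have h3 : ∀ᶠ x in atTop, |ℓ (2 * x) / ℓ x - 1| < ε := by
      have := (hℓ.2 2 two_pos) (Metric.ball_mem_nhds (1:ℝ) hε)
      simpa [Metric.mem_ball, Real.dist_eq] using this
    filter_upwards [h1, h2, h3, eventually_ge_atTop (1:ℝ)] with x hx1 hx2 hx3 hx4
    have hxpos : (0:ℝ) < x := lt_of_lt_of_le one_pos hx4
    have hℓx : 0 < ℓ x := hℓ.1 x hxpos
    have hℓ2x : 0 < ℓ (2 * x) := hℓ.1 _ (by linarith)
    have hxp : (0:ℝ) < x ^ ((2:ℝ) - α) := Real.rpow_pos_of_pos hxpos _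
    have h2xp : (0:ℝ) < (2 * x) ^ ((2:ℝ) - α) := Real.rpow_pos_of_pos (by linarith) _
    have hy : (0:ℝ) < x ^ ((2:ℝ) - α) * ℓ x := mul_pos hxp hℓx
    have hy2 : (0:ℝ) < (2 * x) ^ ((2:ℝ) - α) * ℓ (2 * x) := mul_pos h2xp hℓ2x
    rw [abs_sub_lt_iff] at hx1 hx2 hx3
    -- U x ≥ (1-ε) y
    have hlow : (1 - ε) * (x ^ ((2:ℝ) - α) * ℓ x) < TailAux.U μ ξ x := by
      have := hx1.2
      rw [sub_lt_iff_lt_add] at this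
      have h' : 1 - ε < TailAux.U μ ξ x / (x ^ ((2:ℝ) - α) * ℓ x) := by linarith
      calc (1 - ε) * (x ^ ((2:ℝ) - α) * ℓ x)
          < (TailAux.U μ ξ x / (x ^ ((2:ℝ) - α) * ℓ x)) * (x ^ ((2:ℝ) - α) * ℓ x) := by
            exact mul_lt_mul_of_pos_right h' hy
        _ = TailAux.U μ ξ x := div_mul_cancel₀ _ hy.ne'
    have hup : TailAux.U μ ξ (2 * x) < (1 + ε) * ((2 * x) ^ ((2:ℝ) - α) * ℓ (2 * x)) := by
      have h' : TailAux.U μ ξ (2 * x) / ((2 * x) ^ ((2:ℝ) - α) * ℓ (2 * x)) < 1 + ε := by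
        have := hx2.1; linarith
      calc TailAux.U μ ξ (2 * x)
          = (TailAux.U μ ξ (2 * x) / ((2 * x) ^ ((2:ℝ) - α) * ℓ (2 * x))) *
            ((2 * x) ^ ((2:ℝ) - α) * ℓ (2 * x)) := (div_mul_cancel₀ _ hy2.ne').symm
        _ < (1 + ε) * ((2 * x) ^ ((2:ℝ) - α) * ℓ (2 * x)) := mul_lt_mul_of_pos_right h' hy2
    have hℓup : ℓ (2 * x) < (1 + ε) * ℓ x := by
      have h' : ℓ (2 * x) / ℓ x < 1 + ε := by have := hx3.1; linarith
      calc ℓ (2 * x) = (ℓ (2 * x) / ℓ x) * ℓ x := (div_mul_cancel₀ _ hℓx.ne').symm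
        _ < (1 + ε) * ℓ x := mul_lt_mul_of_pos_right h' hℓx
    have hsplit : (2 * x) ^ ((2:ℝ) - α) = (2:ℝ) ^ ((2:ℝ) - α) * x ^ ((2:ℝ) - α) :=
      Real.mul_rpow (by norm_num) hxpos.le
    have hstep : TailAux.U μ ξ (2 * x) <
        (1 + ε) * ((1 + ε) * ((2:ℝ) ^ ((2:ℝ) - α) * (x ^ ((2:ℝ) - α) * ℓ x))) := by
      calc TailAux.U μ ξ (2 * x)
          < (1 + ε) * ((2 * x) ^ ((2:ℝ) - α) * ℓ (2 * x)) := hup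
        _ = (1 + ε) * ((2:ℝ) ^ ((2:ℝ) - α) * x ^ ((2:ℝ) - α) * ℓ (2 * x)) := by rw [hsplit]
        _ ≤ (1 + ε) * ((2:ℝ) ^ ((2:ℝ) - α) * x ^ ((2:ℝ) - α) * ((1 + ε) * ℓ x)) := by
            gcongr
        _ = (1 + ε) * ((1 + ε) * ((2:ℝ) ^ ((2:ℝ) - α) * (x ^ ((2:ℝ) - α) * ℓ x))) := by ring
    have h1ε : (0:ℝ) < 1 - ε := by linarith
    have hyU : x ^ ((2:ℝ) - α) * ℓ x ≤ TailAux.U μ ξ x / (1 - ε) := by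
      rw [le_div_iff₀ h1ε]
      nlinarith
    calc TailAux.U μ ξ (2 * x)
        ≤ (1 + ε) * ((1 + ε) * ((2:ℝ) ^ ((2:ℝ) - α) * (x ^ ((2:ℝ) - α) * ℓ x))) := hstep.le
      _ ≤ (1 + ε) * ((1 + ε) * ((2:ℝ) ^ ((2:ℝ) - α) * (TailAux.U μ ξ x / (1 - ε)))) := by
          gcongr
      _ = M * TailAux.U μ ξ x := by
          rw [hMdef]
          field_simp
  obtain ⟨X0, hX0⟩ := eventually_atTop.mp hev
  obtain ⟨K, hK⟩ := hbound
  rw [eventually_map] at hK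
  set Cb : ℝ := max ((2:ℝ) ^ β) 1 with hCbdef
  set C : ℝ := Cb * M * (1 - (2:ℝ) ^ (β - 2) * M)⁻¹ with hCdef
  have hC0 : 0 ≤ C := by
    rw [hCdef]
    have h1 : (0:ℝ) ≤ Cb := le_trans zero_le_one (le_max_right _ _)
    have h2 : (0:ℝ) ≤ (1 - (2:ℝ) ^ (β - 2) * M)⁻¹ := inv_nonneg.2 (by linarith)
    positivity
  refine isBoundedUnder_of_eventually_le (a := C * K) ?_
  filter_upwards [hK, hb.eventually_ge_atTop (max X0 1)] with n hKn hbn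
  have hx1 : (1:ℝ) ≤ b n := le_trans (le_max_right _ _) hbn
  have hdbl : ∀ y, b n ≤ y → TailAux.U μ ξ (2 * y) ≤ M * TailAux.U μ ξ y := fun y hy =>
    hX0 y (le_trans (le_max_left _ _) (le_trans hbn hy))
  obtain ⟨hint, hle⟩ := TailAux.tail_bound hξ β M hM0 hrM (b n) hx1 hdbl
  have hbpow : (0:ℝ) ≤ (b n) ^ (-β) := Real.rpow_nonneg (hbpos n).le _
  have he2 : (b n) ^ (-β) * (b n) ^ (β - 2) = (b n) ^ (-(2:ℝ)) := by
    rw [← Real.rpow_add (hbpos n)]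
    congr 1
    ring
  have hUb := TailAux.U_nonneg (μ := μ) (ξ := ξ) (b n)
  calc (n : ℝ) * (b n) ^ (-β) * ∫ ω, (if b n < |ξ ω| then |ξ ω| ^ β else 0) ∂μ
      ≤ (n : ℝ) * (b n) ^ (-β) * (C * (b n) ^ (β - 2) * TailAux.U μ ξ (b n)) := by
        refine mul_le_mul_of_nonneg_left ?_ (by positivity)
        exact hle
    _ = C * ((n : ℝ) * ((b n) ^ (-β) * (b n) ^ (β - 2)) * TailAux.U μ ξ (b n)) := by ring
    _ = C * ((n : ℝ) * (b n) ^ (-(2:ℝ)) * TailAux.U μ ξ (b n)) := by rw [he2]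
    _ ≤ C * K := by
        refine mul_le_mul_of_nonneg_left ?_ hC0
        rw [TailAux.U_def]
        exact hKn
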